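/- Let D ≥ 2 and n = D^m for some natural number m ≥ 1. Let P be a PMF on n symbols whose entries are sorted nonincreasingly (P i ≥ P j whenever i ≤ j), and suppose the minimum expected length of P equals m: L_D(P) = m. Then the sum of the lowest D probabilities of P is greater than or equal to its highest probability: ∑_{i=n−D}^{n−1} P i ≥ P 0. -/

import Mathlib

/-- `P` is a probability mass function on `n` symbols: all entries positive, summing to 1. -/
def IsPMF {n : ℕ} (P : Fin n → ℝ) : Prop :=
  (∀ i, 0 < P i) ∧ ∑ i, P i = 1

/-- `c` is a `D`-ary prefix code on `n` symbols: injective, and no codeword is a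
prefix of another. -/
def IsPrefixCode {D n : ℕ} (c : Fin n → List (Fin D)) : Prop :=
  Function.Injective c ∧ ∀ i j : Fin n, i ≠ j → ¬ (c i <+: c j)

/-- Expected length of the code `c` under the PMF `P`. -/
noncomputable def expLen {D n : ℕ} (P : Fin n → ℝ) (c : Fin n → List (Fin D)) : ℝ :=
  ∑ i, P i * ((c i).length : ℝ)

/-- Minimum expected length: infimum of expected lengths over all `D`-ary prefix codes. -/
noncomputable def minExpLen (D : ℕ) {n : ℕ} (P : Fin n → ℝ) : ℝ :=
  sInf {x : ℝ | ∃ c : Fin n → List (Fin D), IsPrefixCode c ∧ x = expLen P c}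

/-- The uniform distribution on `n` symbols. -/
noncomputable def unif (n : ℕ) : Fin n → ℝ := fun _ => 1 / n

section Stmt6Aux
set_option maxHeartbeats 1000000

lemma stmt6_digeq {D : ℕ} (hD : 0 < D) : ∀ (k i j : ℕ), i < D ^ k → j < D ^ k →
    (∀ p < k, i / D ^ p % D = j / D ^ p % D) → i = j := by
  intro k
  induction k with
  | zero => intro i j hi hj _; simp at hi hj; omega
  | succ k ih =>
    intro i j hi hj h
    have h0 : i % D = j % D := by simpa using h 0 (by omega)
    have hd : i / D = j / D := by
      apply ih
      · exact Nat.div_lt_of_lt_mul (by rwa [pow_succ'] at hi)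
      · exact Nat.div_lt_of_lt_mul (by rwa [pow_succ'] at hj)
      · intro p hp
        have e : ∀ x : ℕ, x / D / D ^ p = x / D ^ (p + 1) := by
          intro x; rw [Nat.div_div_eq_div_mul, ← pow_succ']
        rw [e, e]
        exact h (p + 1) (by omega)
    conv_lhs => rw [← Nat.div_add_mod i D]
    rw [hd, h0, Nat.div_add_mod]

lemma stmt6_pred_pow_div {D : ℕ} (hD : 0 < D) {p k : ℕ} (hpk : p ≤ k) :
    (D ^ k - 1) / D ^ p = D ^ (k - p) - 1 := by
  have h1 : D ^ k = D ^ p * D ^ (k - p) := by rw [← pow_add]; congr 1; omega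
  have h2 : 0 < D ^ p := pow_pos hD p
  have h3 : 0 < D ^ (k - p) := pow_pos hD _
  have h4 : D ^ k - 1 = D ^ p * (D ^ (k - p) - 1) + (D ^ p - 1) := by
    obtain ⟨q, hq⟩ : ∃ q, D ^ (k - p) = q + 1 := ⟨D ^ (k - p) - 1, by omega⟩
    have h5 : D ^ p * (D ^ (k - p) - 1) + D ^ p = D ^ p * D ^ (k - p) := by
      rw [hq]; simp [Nat.mul_add]
    omega
  rw [h4, Nat.mul_add_div h2, Nat.div_eq_of_lt (by omega), add_zero]

lemma stmt6_pred_pow_mod {D : ℕ} (hD : 2 ≤ D) {p k : ℕ} (hpk : p < k) :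
    (D ^ k - 1) / D ^ p % D = D - 1 := by
  rw [stmt6_pred_pow_div (by omega) (le_of_lt hpk)]
  obtain ⟨q, hq⟩ : ∃ q, k - p = q + 1 := ⟨k - p - 1, by omega⟩
  rw [hq, pow_succ]
  have h4 : 0 < D ^ q := pow_pos (by omega) q
  have h5 : D ^ q * D - 1 = (D - 1) + (D ^ q - 1) * D := by
    have : (D ^ q - 1) * D = D ^ q * D - D := by rw [Nat.sub_mul, one_mul]
    have : D ≤ D ^ q * D := Nat.le_mul_of_pos_left D h4
    omega
  rw [h5, Nat.add_mul_mod_self_right, Nat.mod_eq_of_lt (by omega)]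

def wrd (D m : ℕ) (hD : 0 < D) (i : ℕ) : List (Fin D) :=
  List.ofFn (fun k : Fin m => ⟨i / D ^ (m - 1 - (k : ℕ)) % D, Nat.mod_lt _ hD⟩)

lemma wrd_length (D m : ℕ) (hD : 0 < D) (i : ℕ) : (wrd D m hD i).length = m := by
  simp [wrd]

lemma wrd_getElem (D m : ℕ) (hD : 0 < D) (i k : ℕ) (hk : k < (wrd D m hD i).length) :
    ((wrd D m hD i)[k]).val = i / D ^ (m - 1 - k) % D := by
  simp [wrd]

def mycode (D m : ℕ) (hD : 2 ≤ D) (hm : 2 ≤ m) (i : Fin (D ^ m)) : List (Fin D) :=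
  if (i : ℕ) = 0 then List.replicate (m - 1) ⟨D - 1, by omega⟩
  else if (i : ℕ) < D ^ m - D then wrd D m (by omega) i
  else List.replicate m ⟨0, by omega⟩ ++
    [⟨(i : ℕ) - (D ^ m - D), by
      have h1 := i.isLt
      have h2 : D ≤ D ^ m := Nat.le_self_pow (by omega) D
      omega⟩]


lemma rep_ne (D m : ℕ) (hD : 2 ≤ D) (hm : 2 ≤ m) (a b : Fin D) (ha : (a : ℕ) = D - 1)
    (hb : (b : ℕ) = 0) (t l2 : List (Fin D)) :
    List.replicate (m - 1) a ++ t ≠ List.replicate m b ++ l2 := by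
  intro h
  have e1 := (List.prefix_append (List.replicate (m - 1) a) t).getElem (i := 0) (by simp; omega)
  have e2 := (List.prefix_append (List.replicate m b) l2).getElem (i := 0) (by simp; omega)
  have e3 := List.getElem_of_eq h (show 0 < (List.replicate (m - 1) a ++ t).length by simp; omega)
  have h1 := e1.trans (e3.trans e2.symm)
  rw [List.getElem_replicate, List.getElem_replicate] at h1
  have := congrArg Fin.val h1
  omega

lemma wrd_rep (D m : ℕ) (hD0 : 0 < D) (hm : 1 ≤ m) (i : ℕ) (b : Fin D) (hb : (b : ℕ) = 0)
    (t l2 : List (Fin D))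
    (h : wrd D m hD0 i ++ t = List.replicate m b ++ l2) :
    ∀ p < m, i / D ^ p % D = 0 := by
  intro p hp
  have e1 := (List.prefix_append (wrd D m hD0 i) t).getElem (i := m - 1 - p)
    (by rw [wrd_length]; omega)
  have e2 := (List.prefix_append (List.replicate m b) l2).getElem (i := m - 1 - p)
    (by simp; omega)
  have e3 := List.getElem_of_eq h
    (show m - 1 - p < (wrd D m hD0 i ++ t).length by simp [wrd_length]; omega)
  have h3 := e1.trans (e3.trans e2.symm)
  rw [List.getElem_replicate] at h3
  have h2 := wrd_getElem D m hD0 i (m - 1 - p) (by rw [wrd_length]; omega)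
  rw [h3] at h2
  rw [show m - 1 - (m - 1 - p) = p by omega] at h2
  omega

lemma mycode_prefixfree (D m : ℕ) (hD : 2 ≤ D) (hm : 2 ≤ m) :
    IsPrefixCode (mycode D m hD hm) := by
  have hD0 : 0 < D := by omega
  have hDD : D * D ≤ D ^ m := by
    calc D * D = D ^ 2 := (sq D).symm
    _ ≤ D ^ m := Nat.pow_le_pow_right hD0 hm
  have hnD : D ≤ D ^ m - D := by
    have h2d : 2 * D ≤ D * D := by nlinarith
    omega
  have hsp : D ^ m = D * D ^ (m - 1) := by
    conv_lhs => rw [show m = (m - 1) + 1 by omega]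
    rw [pow_succ']
  have key : ∀ i j : Fin (D ^ m), i ≠ j → ¬ (mycode D m hD hm i <+: mycode D m hD hm j) := by
    intro i j hne hpre
    obtain ⟨t, ht⟩ := hpre
    by_cases hi0 : (i : ℕ) = 0
    · by_cases hj0 : (j : ℕ) = 0
      · exact hne (Fin.ext (by omega))
      rw [mycode, if_pos hi0, mycode, if_neg hj0] at ht
      by_cases hjB : (j : ℕ) < D ^ m - D
      · -- case i = 0, j middle
        rw [if_pos hjB] at ht
        have hdig : ∀ p, 1 ≤ p → p < m → (j : ℕ) / D ^ p % D = D - 1 := by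
          intro p hp1 hpm
          have hpre' : List.replicate (m - 1) (⟨D - 1, by omega⟩ : Fin D) <+:
              wrd D m (by omega) (j : ℕ) := ⟨t, ht⟩
          have h1 := hpre'.getElem (i := m - 1 - p) (by simp; omega)
          rw [List.getElem_replicate] at h1
          have h2 := wrd_getElem D m hD0 (j : ℕ) (m - 1 - p) (by rw [wrd_length]; omega)
          rw [← h1] at h2
          simp at h2
          rw [show m - 1 - (m - 1 - p) = p by omega] at h2
          omega
        have hq : (j : ℕ) / D = D ^ (m - 1) - 1 := by
          apply stmt6_digeq hD0 (m - 1)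
          · apply Nat.div_lt_of_lt_mul
            have := j.isLt
            omega
          · have := pow_pos hD0 (m - 1); omega
          · intro p hp
            have e : (j : ℕ) / D / D ^ p = (j : ℕ) / D ^ (p + 1) := by
              rw [Nat.div_div_eq_div_mul, ← pow_succ']
            rw [e, hdig (p + 1) (by omega) (by omega), stmt6_pred_pow_mod hD (by omega)]
        have h3 : (j : ℕ) / D * D ≤ (j : ℕ) := Nat.div_mul_le_self _ _
        have h4 : (D ^ (m - 1) - 1) * D = D ^ m - D := by
          rw [Nat.sub_mul, one_mul, ← pow_succ]
          congr 2
          omega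
        rw [hq, h4] at h3
        omega
      · -- case i = 0, j high
        rw [if_neg hjB] at ht
        exact rep_ne D m hD hm _ _ rfl rfl t _ ht
    · by_cases hiB : (i : ℕ) < D ^ m - D
      · by_cases hj0 : (j : ℕ) = 0
        · rw [mycode, if_neg hi0, if_pos hiB, mycode, if_pos hj0] at ht
          have := congrArg List.length ht
          simp [wrd_length] at this
          omega
        rw [mycode, if_neg hi0, if_pos hiB, mycode, if_neg hj0] at ht
        by_cases hjB : (j : ℕ) < D ^ m - D
        · -- middle middle
          rw [if_pos hjB] at ht
          have hlen : t = [] := by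
            have := congrArg List.length ht
            simp [wrd_length] at this
            simpa using this
          rw [hlen, List.append_nil] at ht
          apply hne
          apply Fin.ext
          apply stmt6_digeq hD0 m _ _ i.isLt j.isLt
          intro p hp
          have h1 := wrd_getElem D m hD0 (i : ℕ) (m - 1 - p) (by rw [wrd_length]; omega)
          have h2 := wrd_getElem D m hD0 (j : ℕ) (m - 1 - p) (by rw [wrd_length]; omega)
          rw [show m - 1 - (m - 1 - p) = p by omega] at h1 h2
          rw [← h1, ← h2]
          exact congrArg Fin.val (List.getElem_of_eq ht (by rw [wrd_length]; omega))
        · -- middle high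
          rw [if_neg hjB] at ht
          apply hi0
          apply stmt6_digeq hD0 m _ 0 i.isLt (pow_pos hD0 m)
          intro p hp
          simp only [Nat.zero_div, Nat.zero_mod]
          exact wrd_rep D m (by omega) (by omega) (i : ℕ) _ rfl t _ ht p hp
      · by_cases hj0 : (j : ℕ) = 0
        · rw [mycode, if_neg hi0, if_neg hiB, mycode, if_pos hj0] at ht
          have := congrArg List.length ht
          simp at this
          omega
        rw [mycode, if_neg hi0, if_neg hiB, mycode, if_neg hj0] at ht
        by_cases hjB : (j : ℕ) < D ^ m - D
        · -- high middle: length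
          rw [if_pos hjB] at ht
          have := congrArg List.length ht
          simp [wrd_length] at this
        · -- high high
          rw [if_neg hjB] at ht
          have hlen : t = [] := by
            have := congrArg List.length ht
            simp at this
            simpa using this
          rw [hlen, List.append_nil] at ht
          have h2 := List.append_cancel_left ht
          simp at h2
          apply hne
          apply Fin.ext
          omega
  refine ⟨?_, key⟩
  intro i j hij
  by_contra hne
  exact key i j hne (hij ▸ List.prefix_rfl)

lemma mycode_length (D m : ℕ) (hD : 2 ≤ D) (hm : 2 ≤ m) (i : Fin (D ^ m)) :
    (mycode D m hD hm i).length =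
      if (i : ℕ) = 0 then m - 1 else if (i : ℕ) < D ^ m - D then m else m + 1 := by
  rw [mycode]
  split_ifs with h1 h2
  · simp
  · simp [wrd_length]
  · simp


end Stmt6Aux

set_option maxHeartbeats 1000000 in
/-- For n = D^m, a nonincreasing PMF with minimum expected length m
has its lowest D probabilities summing to at least its highest probability. -/
theorem stmt_6 (D m : ℕ) (hD : 2 ≤ D) (hm : 1 ≤ m)
    (P : Fin (D ^ m) → ℝ) (hP : IsPMF P)
    (hsorted : ∀ i j : Fin (D ^ m), i ≤ j → P j ≤ P i)
    (hopt : minExpLen D P = m) :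
    P ⟨0, pow_pos (by omega) m⟩ ≤
      ∑ i ∈ Finset.univ.filter (fun i : Fin (D ^ m) => D ^ m - D ≤ (i : ℕ)), P i := by
  have hopt' : sInf {x : ℝ | ∃ c : Fin (D ^ m) → List (Fin D),
      IsPrefixCode c ∧ x = expLen P c} = (m : ℝ) := hopt
  rcases Nat.lt_or_ge m 2 with hm1 | hm2
  · -- m = 1 : the sum is over everything
    have hm1 : m = 1 := by omega
    have hfil : Finset.univ.filter (fun i : Fin (D ^ m) => D ^ m - D ≤ (i : ℕ)) =
        Finset.univ := by
      apply Finset.filter_true_of_mem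
      intro i _
      subst hm1
      simp [pow_one]
    rw [hfil]
    calc P ⟨0, pow_pos (by omega) m⟩ ≤ ∑ i, P i :=
          Finset.single_le_sum (fun i _ => (hP.1 i).le) (Finset.mem_univ _)
      _ = _ := by rw [hP.2]
  · by_contra hlt
    push_neg at hlt
    set S := ∑ i ∈ Finset.univ.filter (fun i : Fin (D ^ m) => D ^ m - D ≤ (i : ℕ)), P i with hS
    have hD0 : 0 < D := by omega
    have hnD : 0 < D ^ m - D := by
      have hDD : D * D ≤ D ^ m := by
        calc D * D = D ^ 2 := (sq D).symm
        _ ≤ D ^ m := Nat.pow_le_pow_right hD0 hm2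
      have : 2 * D ≤ D * D := by nlinarith
      omega
    set c := mycode D m hD hm2 with hc
    have hE : expLen P c = m + S - P ⟨0, pow_pos (by omega) m⟩ := by
      rw [expLen]
      have h1 : ∀ i : Fin (D ^ m), P i * (((c i).length : ℕ) : ℝ) =
          P i * m + (if D ^ m - D ≤ (i : ℕ) then P i else 0)
            - (if (i : ℕ) = 0 then P i else 0) := by
        intro i
        rw [hc, mycode_length]
        split_ifs with h1 h2 h3 h4 h5
        · omega
        · -- i = 0
          rw [Nat.cast_sub (by omega), Nat.cast_one]
          ring
        · omega
        · -- middle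
          ring
        · -- high
          push_cast
          ring
        · omega
      rw [Finset.sum_congr rfl (fun i _ => h1 i)]
      rw [Finset.sum_sub_distrib, Finset.sum_add_distrib, ← Finset.sum_mul, hP.2, one_mul]
      congr 1
      · congr 1
        rw [hS, Finset.sum_filter]
      · rw [Finset.sum_eq_single_of_mem (⟨0, pow_pos (by omega) m⟩ : Fin (D ^ m))
          (Finset.mem_univ _)]
        · simp
        · intro b _ hb
          rw [if_neg]
          intro hb0
          exact hb (Fin.ext hb0)
    have hmem : expLen P c ∈
        {x : ℝ | ∃ c : Fin (D ^ m) → List (Fin D), IsPrefixCode c ∧ x = expLen P c} :=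
      ⟨c, mycode_prefixfree D m hD hm2, rfl⟩
    have hbdd : BddBelow
        {x : ℝ | ∃ c : Fin (D ^ m) → List (Fin D), IsPrefixCode c ∧ x = expLen P c} := by
      refine ⟨0, ?_⟩
      rintro x ⟨c', _, rfl⟩
      exact Finset.sum_nonneg fun i _ => mul_nonneg (hP.1 i).le (Nat.cast_nonneg _)
    have hle := csInf_le hbdd hmem
    rw [hopt', hE] at hle
    linarith
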